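/- arXiv:1004.2717 — 8 statements merged into one kernel-verified Lean document; each statement's English description precedes it below -/
import Mathlib

section
/- Let A be a lattice with least element ⊥, let f : A → A be an O-adjoint via a finitary G, and let a ∈ A be a least fixed point of f (i.e., f a = a, and a ≤ b for every b with f b ≤ b). Then a is the least upper bound of the set {f^[n] ⊥ | n ∈ ℕ}: f^[n] ⊥ ≤ a for every n, and for every ψ ∈ A, if f^[n] ⊥ ≤ ψ for all n ∈ ℕ, then a ≤ ψ. (Every finitary O-adjoint is constructive.) -/
/-- Every finitary O-adjoint is constructive: if `f : A → A` is an
O-adjoint via a finitary `G` on a lattice `A` with bottom, and `a` is a least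
fixed point of `f`, then `a` is the least upper bound of `{f^[n] ⊥ | n ∈ ℕ}`. -/
theorem finitary_oAdjoint_constructive {A : Type*} [Lattice A] [OrderBot A]
    (G : A → Finset A) (f : A → A)
    (hG : ∀ ρ ψ : A, f ρ ≤ ψ ↔ ∃ χ ∈ G ψ, ρ ≤ χ)
    (hfin : ∀ ψ : A,
      (⋂₀ {S : Set A | ψ ∈ S ∧ ∀ χ ∈ S, (G χ : Set A) ⊆ S}).Finite)
    (a : A) (hfp : f a = a) (hleast : ∀ b : A, f b ≤ b → a ≤ b) :
    (∀ n : ℕ, f^[n] ⊥ ≤ a) ∧ (∀ ψ : A, (∀ n : ℕ, f^[n] ⊥ ≤ ψ) → a ≤ ψ) := by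
  classical
  -- f is monotone
  have hmono : ∀ x y : A, x ≤ y → f x ≤ f y := by
    intro x y hxy
    obtain ⟨χ, hχ, hy⟩ := (hG y (f y)).1 le_rfl
    exact (hG x (f y)).2 ⟨χ, hχ, hxy.trans hy⟩
  -- the chain f^[n] ⊥ is monotone
  have hchain : Monotone (fun n : ℕ => f^[n] ⊥) := by
    apply monotone_nat_of_le_succ
    intro n
    induction n with
    | zero => exact bot_le
    | succ n ih =>
      rw [Function.iterate_succ_apply', Function.iterate_succ_apply']
      exact hmono _ _ ih
  constructor
  · intro n
    induction n with
    | zero => exact bot_le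
    | succ n ih =>
      rw [Function.iterate_succ_apply']
      calc f (f^[n] ⊥) ≤ f a := hmono _ _ ih
        _ = a := hfp
  · intro ψ hψ
    set S : Set A := ⋂₀ {S : Set A | ψ ∈ S ∧ ∀ χ ∈ S, (G χ : Set A) ⊆ S} with hS
    have hSψ : ψ ∈ S := fun s hs => hs.1
    have hSclosed : ∀ χ ∈ S, (G χ : Set A) ⊆ S := by
      intro χ hχ χ' hχ' s hs
      exact hs.2 χ (hχ s hs) hχ'
    -- the key step: the set T below is closed under a choice from G
    have key : ∀ χ, (∀ n : ℕ, f^[n] ⊥ ≤ χ) → ∃ χ' ∈ G χ, ∀ n : ℕ, f^[n] ⊥ ≤ χ' := by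
      intro χ hχ
      by_contra hcon
      push_neg at hcon
      set g : A → ℕ := fun χ' => if h : ∃ n : ℕ, ¬ f^[n] ⊥ ≤ χ' then h.choose else 0 with hg
      set N := (G χ).sup g with hN
      have hN1 : f (f^[N] ⊥) ≤ χ := by
        have := hχ (N + 1)
        rwa [Function.iterate_succ_apply'] at this
      obtain ⟨χ', hχ'G, hle⟩ := (hG (f^[N] ⊥) χ).1 hN1
      obtain ⟨m, hm⟩ := hcon χ' hχ'G
      have hex : ∃ n : ℕ, ¬ f^[n] ⊥ ≤ χ' := ⟨m, hm⟩
      have hgχ' : ¬ f^[g χ'] ⊥ ≤ χ' := by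
        simp only [hg, dif_pos hex]
        exact hex.choose_spec
      exact hgχ' ((hchain (Finset.le_sup hχ'G)).trans hle)
    -- T : elements of the closure above all iterates
    set T : Set A := {χ ∈ S | ∀ n : ℕ, f^[n] ⊥ ≤ χ} with hT
    have hTfin : T.Finite := (hfin ψ).subset (fun χ hχ => hχ.1)
    have hψT : ψ ∈ T := ⟨hSψ, hψ⟩
    set Tf := hTfin.toFinset with hTf
    have hne : Tf.Nonempty := ⟨ψ, hTfin.mem_toFinset.2 hψT⟩
    set b := Tf.inf' hne id with hb
    have hfb : f b ≤ b := by
      rw [hb, Finset.le_inf'_iff]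
      intro χ hχ
      have hχT : χ ∈ T := hTfin.mem_toFinset.1 hχ
      obtain ⟨χ', hχ'G, hχ'⟩ := key χ hχT.2
      have hχ'T : χ' ∈ Tf :=
        hTfin.mem_toFinset.2 ⟨hSclosed χ hχT.1 hχ'G, hχ'⟩
      exact (hG b χ).2 ⟨χ', hχ'G, Finset.inf'_le id hχ'T⟩
    calc a ≤ b := hleast b hfb
      _ ≤ ψ := Finset.inf'_le id (hTfin.mem_toFinset.2 hψT)
end

section
/- Let A be a complete lattice and let f : A → A be an O-adjoint via a finitary G (hence f is monotone). Then the least fixed point of f equals the supremum ⨆_{n ∈ ℕ} f^[n] ⊥ of the finite iterates of f applied to the bottom element. -/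
/-- In a complete lattice, the least fixed point of a finitary
O-adjoint `f` (which is monotone) equals the supremum of the iterates
`f^[n] ⊥`. -/
theorem lfp_finitary_oAdjoint_eq_iSup_iterate {A : Type*} [CompleteLattice A]
    (G : A → Finset A) (f : A → A)
    (hG : ∀ ρ ψ : A, f ρ ≤ ψ ↔ ∃ χ ∈ G ψ, ρ ≤ χ)
    (hfin : ∀ ψ : A,
      (⋂₀ {S : Set A | ψ ∈ S ∧ ∀ χ ∈ S, (G χ : Set A) ⊆ S}).Finite)
    (hmono : Monotone f) :
    OrderHom.lfp ⟨f, hmono⟩ = ⨆ n : ℕ, f^[n] ⊥ := by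
  set s : A := ⨆ n : ℕ, f^[n] ⊥ with hs
  have hchain : Monotone fun n : ℕ => f^[n] ⊥ := by
    apply monotone_nat_of_le_succ
    intro n
    induction n with
    | zero => exact bot_le
    | succ n ih =>
        rw [Function.iterate_succ_apply', Function.iterate_succ_apply']
        exact hmono ih
  apply le_antisymm
  · -- lfp ≤ s : it suffices that f s ≤ s
    apply OrderHom.lfp_le
    show f s ≤ s
    rw [hG]
    -- for each n, a witness χ_n ∈ G s with f^[n] ⊥ ≤ χ_n
    have hwit : ∀ n : ℕ, ∃ χ ∈ G s, f^[n] ⊥ ≤ χ := by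
      intro n
      have h1 : f (f^[n] ⊥) ≤ s := by
        have := le_iSup (fun n : ℕ => f^[n] ⊥) (n + 1)
        rwa [Function.iterate_succ_apply' f n ⊥] at this
      exact (hG _ _).mp h1
    choose χ hχmem hχle using hwit
    -- pigeonhole: some value of χ occurs infinitely often
    have hGfin : Finite {x // x ∈ G s} := Finset.finite_toSet (G s)
    obtain ⟨⟨c, hcmem⟩, hcfib⟩ :=
      Finite.exists_infinite_fiber (fun n : ℕ => (⟨χ n, hχmem n⟩ : {x // x ∈ G s}))
    refine ⟨c, hcmem, iSup_le fun m => ?_⟩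
    have hinf : ((fun n : ℕ => (⟨χ n, hχmem n⟩ : {x // x ∈ G s})) ⁻¹'
        {⟨c, hcmem⟩}).Infinite := Set.infinite_coe_iff.mp hcfib
    obtain ⟨n, hn, hmn⟩ := hinf.exists_gt m
    have : χ n = c := by
      have := hn
      simp only [Set.mem_preimage, Set.mem_singleton_iff, Subtype.mk.injEq] at this
      exact this
    calc f^[m] ⊥ ≤ f^[n] ⊥ := hchain hmn.le
      _ ≤ χ n := hχle n
      _ = c := this
  · -- s ≤ lfp
    apply iSup_le
    intro n
    induction n with
    | zero => exact bot_le
    | succ n ih =>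
        rw [Function.iterate_succ_apply']
        calc f (f^[n] ⊥) ≤ f (OrderHom.lfp ⟨f, hmono⟩) := hmono ih
          _ = OrderHom.lfp ⟨f, hmono⟩ := OrderHom.map_lfp ⟨f, hmono⟩
end

section
/- Let A be a partial order, and suppose f : A → A is an O-adjoint via G_f and g : A → A is an O-adjoint via G_g. Then the composite f ∘ g is an O-adjoint via the map ψ ↦ {χ' | there exists χ ∈ G_f ψ with χ' ∈ G_g χ} (the finite union of the sets G_g χ over χ ∈ G_f ψ); that is, for all ρ, ψ ∈ A: f (g ρ) ≤ ψ if and only if ρ ≤ χ' for some χ ∈ G_f ψ and χ' ∈ G_g χ. -/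
/-- O-adjoints are closed under composition: if `f` is an O-adjoint
via `Gf` and `g` is an O-adjoint via `Gg`, then `f ∘ g` is an O-adjoint via
`ψ ↦ ⋃ χ ∈ Gf ψ, Gg χ`. -/
theorem oAdjoint_comp {A : Type*} [PartialOrder A]
    (Gf Gg : A → Finset A) (f g : A → A)
    (hGf : ∀ ρ ψ : A, f ρ ≤ ψ ↔ ∃ χ ∈ Gf ψ, ρ ≤ χ)
    (hGg : ∀ ρ ψ : A, g ρ ≤ ψ ↔ ∃ χ ∈ Gg ψ, ρ ≤ χ) :
    ∀ ρ ψ : A, f (g ρ) ≤ ψ ↔ ∃ χ ∈ Gf ψ, ∃ χ' ∈ Gg χ, ρ ≤ χ' := by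
  intro ρ ψ
  constructor
  · intro h
    obtain ⟨χ, hχ, hle⟩ := (hGf _ _).mp h
    obtain ⟨χ', hχ', hle'⟩ := (hGg _ _).mp hle
    exact ⟨χ, hχ, χ', hχ', hle'⟩
  · rintro ⟨χ, hχ, χ', hχ', hle⟩
    exact (hGf _ _).mpr ⟨χ, hχ, (hGg _ _).mpr ⟨χ', hχ', hle⟩⟩
end

section
/- Let A be a lattice, and suppose f : A → A is an O-adjoint via G_f and g : A → A is an O-adjoint via G_g. Then the pointwise join h, defined by h x = f x ⊔ g x, is an O-adjoint via the map ψ ↦ {χ ⊓ χ' | χ ∈ G_f ψ, χ' ∈ G_g ψ}; that is, for all ρ, ψ ∈ A: f ρ ⊔ g ρ ≤ ψ if and only if ρ ≤ χ ⊓ χ' for some χ ∈ G_f ψ and χ' ∈ G_g ψ. -/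
/-- O-adjoints are closed under pointwise joins: if `f` is an
O-adjoint via `Gf` and `g` via `Gg` on a lattice, then `x ↦ f x ⊔ g x` is an
O-adjoint via `ψ ↦ {χ ⊓ χ' | χ ∈ Gf ψ, χ' ∈ Gg ψ}`. -/
theorem oAdjoint_sup {A : Type*} [Lattice A]
    (Gf Gg : A → Finset A) (f g : A → A)
    (hGf : ∀ ρ ψ : A, f ρ ≤ ψ ↔ ∃ χ ∈ Gf ψ, ρ ≤ χ)
    (hGg : ∀ ρ ψ : A, g ρ ≤ ψ ↔ ∃ χ ∈ Gg ψ, ρ ≤ χ) :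
    ∀ ρ ψ : A, f ρ ⊔ g ρ ≤ ψ ↔ ∃ χ ∈ Gf ψ, ∃ χ' ∈ Gg ψ, ρ ≤ χ ⊓ χ' := by
  intro ρ ψ
  rw [sup_le_iff, hGf, hGg]
  constructor
  · rintro ⟨⟨χ, hχ, h1⟩, ⟨χ', hχ', h2⟩⟩
    exact ⟨χ, hχ, χ', hχ', le_inf h1 h2⟩
  · rintro ⟨χ, hχ, χ', hχ', h⟩
    exact ⟨⟨χ, hχ, h.trans inf_le_left⟩, ⟨χ', hχ', h.trans inf_le_right⟩⟩
end

section
/- Let A be a Boolean algebra, let c ∈ A, and suppose f : A → A is an O-adjoint via G_f. Then the map h defined by h x = c ⊓ f x is an O-adjoint via the map ψ ↦ G_f (cᶜ ⊔ ψ); that is, for all ρ, ψ ∈ A: c ⊓ f ρ ≤ ψ if and only if ρ ≤ χ for some χ ∈ G_f (cᶜ ⊔ ψ). -/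
/-- O-adjoints are closed under meet with a constant: if `f` is an
O-adjoint via `Gf` on a Boolean algebra and `c` is a constant, then
`x ↦ c ⊓ f x` is an O-adjoint via `ψ ↦ Gf (cᶜ ⊔ ψ)`. -/
theorem oAdjoint_const_inf {A : Type*} [BooleanAlgebra A]
    (Gf : A → Finset A) (f : A → A) (c : A)
    (hGf : ∀ ρ ψ : A, f ρ ≤ ψ ↔ ∃ χ ∈ Gf ψ, ρ ≤ χ) :
    ∀ ρ ψ : A, c ⊓ f ρ ≤ ψ ↔ ∃ χ ∈ Gf (cᶜ ⊔ ψ), ρ ≤ χ := by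
  intro ρ ψ
  rw [inf_comm, ← le_himp_iff, himp_eq, sup_comm, hGf]
end

section
/- Let B be a Boolean algebra and let c, d, ρ ∈ B. Then there exists a ∈ B such that ((a ⊓ c) ⊔ (aᶜ ⊓ d)) ⊓ (ρᶜ ⊔ a) = ⊤ if and only if c ⊔ (ρᶜ ⊓ d) = ⊤. -/
/-- In a Boolean algebra, there exists `a` with
`((a ⊓ c) ⊔ (aᶜ ⊓ d)) ⊓ (ρᶜ ⊔ a) = ⊤` iff `c ⊔ (ρᶜ ⊓ d) = ⊤`. -/
theorem shannon_witness_iff {B : Type*} [BooleanAlgebra B] (c d ρ : B) :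
    (∃ a : B, ((a ⊓ c) ⊔ (aᶜ ⊓ d)) ⊓ (ρᶜ ⊔ a) = ⊤) ↔ c ⊔ (ρᶜ ⊓ d) = ⊤ := by
  constructor
  · rintro ⟨a, h⟩
    rw [inf_eq_top_iff] at h
    obtain ⟨h1, h2⟩ := h
    have hρa : ρ ≤ a := by
      calc ρ = ρ ⊓ (ρᶜ ⊔ a) := by rw [h2, inf_top_eq]
        _ = (ρ ⊓ ρᶜ) ⊔ (ρ ⊓ a) := inf_sup_left ρ ρᶜ a
        _ ≤ a := by simp
    have haρ : aᶜ ≤ ρᶜ := compl_le_compl hρa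
    rw [eq_top_iff, ← h1]
    exact sup_le_sup inf_le_right (inf_le_inf_right d haρ)
  · intro h
    refine ⟨ρ ⊔ c, ?_⟩
    have h2 : ρᶜ ⊔ (ρ ⊔ c) = ⊤ := by
      rw [← sup_assoc, compl_sup_eq_top, top_sup_eq]
    have h1 : ((ρ ⊔ c) ⊓ c) ⊔ ((ρ ⊔ c)ᶜ ⊓ d) = ⊤ := by
      rw [inf_eq_right.mpr le_sup_right, compl_sup,
        sup_inf_left, sup_inf_left, sup_compl_eq_top, inf_top_eq, ← sup_inf_left, h]
    rw [h1, h2, inf_top_eq]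
end

section
/- Let X be a type, let n, m be natural numbers, let A : Fin n → Set X and B : Fin m → Set X, let r : Fin n → ℕ and s : Fin m → ℕ be positive (r i ≥ 1 and s j ≥ 1 for all i, j), and let k : Fin n → ℕ and l : Fin m → ℕ satisfy the side condition ∑_i r i · (k i + 1) ≥ 1 + ∑_j s j · (l j). Suppose the premise holds pointwise: for every x ∈ X, ∑_{j : x ∈ B j} s j ≥ ∑_{i : x ∉ A i} r i. Then for every finitely supported multiset μ : X →₀ ℕ, either there exists i with ∑_{x ∉ A i} μ x ≤ k i, or there exists j with ∑_{x ∈ B j} μ x > l j. -/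
open scoped Classical

/-- One-step soundness of the graded rule schema over multiset
semantics. If the premise `∑ -rᵢ(¬aᵢ) + ∑ sⱼ bⱼ ≥ 0` holds pointwise and the
side condition `∑ rᵢ (kᵢ + 1) ≥ 1 + ∑ sⱼ lⱼ` holds, then for every finite
multiset `μ` over `X`, the conclusion
`⋁ᵢ [kᵢ] Aᵢ ∨ ⋁ⱼ ⟨lⱼ⟩ Bⱼ` holds of `μ`. -/
theorem graded_rule_one_step_sound {X : Type*} {n m : ℕ}
    (A : Fin n → Set X) (B : Fin m → Set X)
    (r : Fin n → ℕ) (s : Fin m → ℕ) (k : Fin n → ℕ) (l : Fin m → ℕ)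
    (hr : ∀ i, 1 ≤ r i) (hs : ∀ j, 1 ≤ s j)
    (hside : ∑ i : Fin n, r i * (k i + 1) ≥ 1 + ∑ j : Fin m, s j * l j)
    (hprem : ∀ x : X,
      (∑ j : Fin m, if x ∈ B j then s j else 0) ≥
        ∑ i : Fin n, if x ∉ A i then r i else 0)
    (μ : X →₀ ℕ) :
    (∃ i : Fin n, ∑ x ∈ μ.support.filter (fun x => x ∉ A i), μ x ≤ k i) ∨
      (∃ j : Fin m, ∑ x ∈ μ.support.filter (fun x => x ∈ B j), μ x > l j) := by
  by_contra hcon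
  push_neg at hcon
  obtain ⟨h1, h2⟩ := hcon
  -- key double sum
  have hlow : ∑ i : Fin n, r i * (k i + 1) ≤
      ∑ x ∈ μ.support, ∑ i : Fin n, (if x ∉ A i then r i else 0) * μ x := by
    rw [Finset.sum_comm]
    apply Finset.sum_le_sum
    intro i _
    have : ∑ x ∈ μ.support, (if x ∉ A i then r i else 0) * μ x
        = r i * ∑ x ∈ μ.support.filter (fun x => x ∉ A i), μ x := by
      rw [Finset.mul_sum, Finset.sum_filter]
      apply Finset.sum_congr rfl
      intro x _
      by_cases hx : x ∉ A i <;> simp [hx]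
    rw [this]
    exact Nat.mul_le_mul_left _ (h1 i)
  have hhigh : ∑ x ∈ μ.support, ∑ j : Fin m, (if x ∈ B j then s j else 0) * μ x ≤
      ∑ j : Fin m, s j * l j := by
    rw [Finset.sum_comm]
    apply Finset.sum_le_sum
    intro j _
    have : ∑ x ∈ μ.support, (if x ∈ B j then s j else 0) * μ x
        = s j * ∑ x ∈ μ.support.filter (fun x => x ∈ B j), μ x := by
      rw [Finset.mul_sum, Finset.sum_filter]
      apply Finset.sum_congr rfl
      intro x _
      by_cases hx : x ∈ B j <;> simp [hx]
    rw [this]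
    exact Nat.mul_le_mul_left _ (h2 j)
  have hmid : ∑ x ∈ μ.support, ∑ i : Fin n, (if x ∉ A i then r i else 0) * μ x ≤
      ∑ x ∈ μ.support, ∑ j : Fin m, (if x ∈ B j then s j else 0) * μ x := by
    apply Finset.sum_le_sum
    intro x _
    rw [← Finset.sum_mul, ← Finset.sum_mul]
    exact Nat.mul_le_mul_right _ (hprem x)
  omega
end

section
/- For every fixed-point formula φ (over any similarity type Λ with an involutive dual map and any set of monotone templates), the Fischer–Ladner closure FL(φ), defined as the least set containing φ that is closed under immediate subformulas, under negation, and under unfolding of fixed-point operators, is finite. -/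
/-- Templates: modal formulas in a parameter variable `p` and an argument
variable `x`, over a similarity type `Λ` of unary modal operators. -/
inductive Tmpl (Λ : Type*) : Type _
  | bot : Tmpl Λ
  | top : Tmpl Λ
  | p : Tmpl Λ
  | x : Tmpl Λ
  | and : Tmpl Λ → Tmpl Λ → Tmpl Λ
  | or : Tmpl Λ → Tmpl Λ → Tmpl Λ
  | mod : Λ → Tmpl Λ → Tmpl Λ

/-- The dual template: swap `⊥`/`⊤` and `∧`/`∨`, replace each modality by its
dual, keep the variables. -/
def Tmpl.dualT {Λ : Type*} (d : Λ → Λ) : Tmpl Λ → Tmpl Λ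
  | .bot => .top
  | .top => .bot
  | .p => .p
  | .x => .x
  | .and γ δ => .or (γ.dualT d) (δ.dualT d)
  | .or γ δ => .and (γ.dualT d) (δ.dualT d)
  | .mod h γ => .mod (d h) (γ.dualT d)

/-- Fixed-point formulas over a similarity type `Λ` and templates. -/
inductive Fp (Λ : Type*) : Type _
  | bot : Fp Λ
  | top : Fp Λ
  | and : Fp Λ → Fp Λ → Fp Λ
  | or : Fp Λ → Fp Λ → Fp Λ
  | mod : Λ → Fp Λ → Fp Λ
  | sharp : Tmpl Λ → Fp Λ → Fp Λ
  | flat : Tmpl Λ → Fp Λ → Fp Λ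

/-- Negation, defined by de Morgan's laws, `¬♥φ = (d ♥)(¬φ)`,
`¬♯_γ(φ) = ♭_{γ̄}(¬φ)` and `¬♭_γ(φ) = ♯_{γ̄}(¬φ)`. -/
def Fp.neg {Λ : Type*} (d : Λ → Λ) : Fp Λ → Fp Λ
  | .bot => .top
  | .top => .bot
  | .and φ ψ => .or (φ.neg d) (ψ.neg d)
  | .or φ ψ => .and (φ.neg d) (ψ.neg d)
  | .mod h φ => .mod (d h) (φ.neg d)
  | .sharp γ φ => .flat (γ.dualT d) (φ.neg d)
  | .flat γ φ => .sharp (γ.dualT d) (φ.neg d)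

/-- Substitution `γ(φ, ψ)`: substitute `φ` for the parameter `p` and `ψ` for
the argument `x` in the template `γ`. -/
def Tmpl.subst {Λ : Type*} : Tmpl Λ → Fp Λ → Fp Λ → Fp Λ
  | .bot, _, _ => .bot
  | .top, _, _ => .top
  | .p, φ, _ => φ
  | .x, _, ψ => ψ
  | .and γ δ, φ, ψ => .and (γ.subst φ ψ) (δ.subst φ ψ)
  | .or γ δ, φ, ψ => .or (γ.subst φ ψ) (δ.subst φ ψ)
  | .mod h γ, φ, ψ => .mod h (γ.subst φ ψ)

/-- A set of formulas is Fischer–Ladner closed if it is closed under immediate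
subformulas, under negation, and under unfolding of fixed points. -/
def FLClosed {Λ : Type*} (d : Λ → Λ) (S : Set (Fp Λ)) : Prop :=
  (∀ φ ψ : Fp Λ, Fp.and φ ψ ∈ S → φ ∈ S ∧ ψ ∈ S) ∧
  (∀ φ ψ : Fp Λ, Fp.or φ ψ ∈ S → φ ∈ S ∧ ψ ∈ S) ∧
  (∀ (h : Λ) (φ : Fp Λ), Fp.mod h φ ∈ S → φ ∈ S) ∧
  (∀ (γ : Tmpl Λ) (φ : Fp Λ), Fp.sharp γ φ ∈ S → φ ∈ S) ∧
  (∀ (γ : Tmpl Λ) (φ : Fp Λ), Fp.flat γ φ ∈ S → φ ∈ S) ∧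
  (∀ φ : Fp Λ, φ ∈ S → φ.neg d ∈ S) ∧
  (∀ (γ : Tmpl Λ) (φ : Fp Λ), Fp.sharp γ φ ∈ S → γ.subst φ (Fp.sharp γ φ) ∈ S) ∧
  (∀ (γ : Tmpl Λ) (φ : Fp Λ), Fp.flat γ φ ∈ S → γ.subst φ (Fp.flat γ φ) ∈ S)

namespace FLaux

variable {Λ : Type*}

/-- Subtemplates of a template (including itself). -/
def subT : Tmpl Λ → Set (Tmpl Λ)
  | .bot => {.bot}
  | .top => {.top}
  | .p => {.p}
  | .x => {.x}
  | .and γ δ => insert (.and γ δ) (subT γ ∪ subT δ)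
  | .or γ δ => insert (.or γ δ) (subT γ ∪ subT δ)
  | .mod h γ => insert (.mod h γ) (subT γ)

lemma self_mem_subT (γ : Tmpl Λ) : γ ∈ subT γ := by
  cases γ <;> simp [subT]

lemma subT_finite (γ : Tmpl Λ) : (subT γ).Finite := by
  induction γ with
  | bot => exact Set.finite_singleton _
  | top => exact Set.finite_singleton _
  | p => exact Set.finite_singleton _
  | x => exact Set.finite_singleton _
  | and γ δ ih1 ih2 => exact ((ih1.union ih2).insert _)
  | or γ δ ih1 ih2 => exact ((ih1.union ih2).insert _)
  | mod h γ ih => exact ih.insert _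

lemma subT_trans {γ δ : Tmpl Λ} (hm : δ ∈ subT γ) : subT δ ⊆ subT γ := by
  induction γ with
  | bot => simp [subT] at hm; subst hm; rfl
  | top => simp [subT] at hm; subst hm; rfl
  | p => simp [subT] at hm; subst hm; rfl
  | x => simp [subT] at hm; subst hm; rfl
  | and γ1 γ2 ih1 ih2 =>
    rcases hm with hm | hm
    · subst hm; rfl
    · rcases hm with hm | hm
      · exact (ih1 hm).trans (by intro a ha; exact Set.mem_insert_iff.mpr (Or.inr (Or.inl ha)))
      · exact (ih2 hm).trans (by intro a ha; exact Set.mem_insert_iff.mpr (Or.inr (Or.inr ha)))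
  | or γ1 γ2 ih1 ih2 =>
    rcases hm with hm | hm
    · subst hm; rfl
    · rcases hm with hm | hm
      · exact (ih1 hm).trans (by intro a ha; exact Set.mem_insert_iff.mpr (Or.inr (Or.inl ha)))
      · exact (ih2 hm).trans (by intro a ha; exact Set.mem_insert_iff.mpr (Or.inr (Or.inr ha)))
  | mod h γ ih =>
    rcases hm with hm | hm
    · subst hm; rfl
    · exact (ih hm).trans (Set.subset_insert _ _)

/-- The pre-closure: closure under immediate subformulas and unfoldings. -/
def C : Fp Λ → Set (Fp Λ)
  | .bot => {.bot}
  | .top => {.top}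
  | .and a b => insert (.and a b) (C a ∪ C b)
  | .or a b => insert (.or a b) (C a ∪ C b)
  | .mod h a => insert (.mod h a) (C a)
  | .sharp γ a => insert (.sharp γ a)
      (C a ∪ (fun δ => Tmpl.subst δ a (.sharp γ a)) '' subT γ)
  | .flat γ a => insert (.flat γ a)
      (C a ∪ (fun δ => Tmpl.subst δ a (.flat γ a)) '' subT γ)

lemma self_mem_C (φ : Fp Λ) : φ ∈ C φ := by
  cases φ <;> simp [C]

lemma C_finite (φ : Fp Λ) : (C φ).Finite := by
  induction φ with
  | bot => exact Set.finite_singleton _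
  | top => exact Set.finite_singleton _
  | and a b ih1 ih2 => exact (ih1.union ih2).insert _
  | or a b ih1 ih2 => exact (ih1.union ih2).insert _
  | mod h a ih => exact ih.insert _
  | sharp γ a ih => exact (ih.union ((subT_finite γ).image _)).insert _
  | flat γ a ih => exact (ih.union ((subT_finite γ).image _)).insert _

lemma C_subst_sharp (γ : Tmpl Λ) (a : Fp Λ) :
    ∀ δ ∈ subT γ, C (Tmpl.subst δ a (Fp.sharp γ a)) ⊆ C (Fp.sharp γ a) := by
  intro δ
  induction δ with
  | bot =>
    intro hm χ hχ
    simp [Tmpl.subst, C] at hχ; subst hχ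
    exact Set.mem_insert_iff.mpr (Or.inr (Or.inr ⟨.bot, hm, rfl⟩))
  | top =>
    intro hm χ hχ
    simp [Tmpl.subst, C] at hχ; subst hχ
    exact Set.mem_insert_iff.mpr (Or.inr (Or.inr ⟨.top, hm, rfl⟩))
  | p =>
    intro _ χ hχ
    exact Set.mem_insert_iff.mpr (Or.inr (Or.inl hχ))
  | x =>
    intro _; exact subset_rfl
  | and δ1 δ2 ih1 ih2 =>
    intro hm χ hχ
    have h1 : δ1 ∈ subT γ := subT_trans hm (by simp [subT, self_mem_subT] : δ1 ∈ subT (.and δ1 δ2))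
    have h2 : δ2 ∈ subT γ := subT_trans hm (by simp [subT, self_mem_subT] : δ2 ∈ subT (.and δ1 δ2))
    rcases Set.mem_insert_iff.mp hχ with h | h
    · subst h
      exact Set.mem_insert_iff.mpr (Or.inr (Or.inr ⟨.and δ1 δ2, hm, rfl⟩))
    · rcases h with h | h
      · exact ih1 h1 h
      · exact ih2 h2 h
  | or δ1 δ2 ih1 ih2 =>
    intro hm χ hχ
    have h1 : δ1 ∈ subT γ := subT_trans hm (by simp [subT, self_mem_subT] : δ1 ∈ subT (.or δ1 δ2))
    have h2 : δ2 ∈ subT γ := subT_trans hm (by simp [subT, self_mem_subT] : δ2 ∈ subT (.or δ1 δ2))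
    rcases Set.mem_insert_iff.mp hχ with h | h
    · subst h
      exact Set.mem_insert_iff.mpr (Or.inr (Or.inr ⟨.or δ1 δ2, hm, rfl⟩))
    · rcases h with h | h
      · exact ih1 h1 h
      · exact ih2 h2 h
  | mod h δ ih =>
    intro hm χ hχ
    have h1 : δ ∈ subT γ := subT_trans hm (by simp [subT, self_mem_subT] : δ ∈ subT (.mod h δ))
    rcases Set.mem_insert_iff.mp hχ with h' | h'
    · subst h'
      exact Set.mem_insert_iff.mpr (Or.inr (Or.inr ⟨.mod h δ, hm, rfl⟩))
    · exact ih h1 h'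

lemma C_subst_flat (γ : Tmpl Λ) (a : Fp Λ) :
    ∀ δ ∈ subT γ, C (Tmpl.subst δ a (Fp.flat γ a)) ⊆ C (Fp.flat γ a) := by
  intro δ
  induction δ with
  | bot =>
    intro hm χ hχ
    simp [Tmpl.subst, C] at hχ; subst hχ
    exact Set.mem_insert_iff.mpr (Or.inr (Or.inr ⟨.bot, hm, rfl⟩))
  | top =>
    intro hm χ hχ
    simp [Tmpl.subst, C] at hχ; subst hχ
    exact Set.mem_insert_iff.mpr (Or.inr (Or.inr ⟨.top, hm, rfl⟩))
  | p =>
    intro _ χ hχ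
    exact Set.mem_insert_iff.mpr (Or.inr (Or.inl hχ))
  | x =>
    intro _; exact subset_rfl
  | and δ1 δ2 ih1 ih2 =>
    intro hm χ hχ
    have h1 : δ1 ∈ subT γ := subT_trans hm (by simp [subT, self_mem_subT] : δ1 ∈ subT (.and δ1 δ2))
    have h2 : δ2 ∈ subT γ := subT_trans hm (by simp [subT, self_mem_subT] : δ2 ∈ subT (.and δ1 δ2))
    rcases Set.mem_insert_iff.mp hχ with h | h
    · subst h
      exact Set.mem_insert_iff.mpr (Or.inr (Or.inr ⟨.and δ1 δ2, hm, rfl⟩))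
    · rcases h with h | h
      · exact ih1 h1 h
      · exact ih2 h2 h
  | or δ1 δ2 ih1 ih2 =>
    intro hm χ hχ
    have h1 : δ1 ∈ subT γ := subT_trans hm (by simp [subT, self_mem_subT] : δ1 ∈ subT (.or δ1 δ2))
    have h2 : δ2 ∈ subT γ := subT_trans hm (by simp [subT, self_mem_subT] : δ2 ∈ subT (.or δ1 δ2))
    rcases Set.mem_insert_iff.mp hχ with h | h
    · subst h
      exact Set.mem_insert_iff.mpr (Or.inr (Or.inr ⟨.or δ1 δ2, hm, rfl⟩))
    · rcases h with h | h
      · exact ih1 h1 h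
      · exact ih2 h2 h
  | mod h δ ih =>
    intro hm χ hχ
    have h1 : δ ∈ subT γ := subT_trans hm (by simp [subT, self_mem_subT] : δ ∈ subT (.mod h δ))
    rcases Set.mem_insert_iff.mp hχ with h' | h'
    · subst h'
      exact Set.mem_insert_iff.mpr (Or.inr (Or.inr ⟨.mod h δ, hm, rfl⟩))
    · exact ih h1 h'

lemma C_trans : ∀ {φ ψ : Fp Λ}, ψ ∈ C φ → C ψ ⊆ C φ := by
  intro φ
  induction φ with
  | bot => intro ψ hm; simp [C] at hm; subst hm; exact subset_rfl
  | top => intro ψ hm; simp [C] at hm; subst hm; exact subset_rfl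
  | and a b ih1 ih2 =>
    intro ψ hm
    rcases hm with hm | hm
    · subst hm; exact subset_rfl
    · rcases hm with hm | hm
      · exact (ih1 hm).trans (fun x hx => Set.mem_insert_iff.mpr (Or.inr (Or.inl hx)))
      · exact (ih2 hm).trans (fun x hx => Set.mem_insert_iff.mpr (Or.inr (Or.inr hx)))
  | or a b ih1 ih2 =>
    intro ψ hm
    rcases hm with hm | hm
    · subst hm; exact subset_rfl
    · rcases hm with hm | hm
      · exact (ih1 hm).trans (fun x hx => Set.mem_insert_iff.mpr (Or.inr (Or.inl hx)))
      · exact (ih2 hm).trans (fun x hx => Set.mem_insert_iff.mpr (Or.inr (Or.inr hx)))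
  | mod h a ih =>
    intro ψ hm
    rcases hm with hm | hm
    · subst hm; exact subset_rfl
    · exact (ih hm).trans (Set.subset_insert _ _)
  | sharp γ a ih =>
    intro ψ hm
    rcases hm with hm | hm
    · subst hm; exact subset_rfl
    · rcases hm with hm | hm
      · exact (ih hm).trans (fun x hx => Set.mem_insert_iff.mpr (Or.inr (Or.inl hx)))
      · rcases hm with ⟨δ, hδ, rfl⟩
        exact C_subst_sharp γ a δ hδ
  | flat γ a ih =>
    intro ψ hm
    rcases hm with hm | hm
    · subst hm; exact subset_rfl
    · rcases hm with hm | hm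
      · exact (ih hm).trans (fun x hx => Set.mem_insert_iff.mpr (Or.inr (Or.inl hx)))
      · rcases hm with ⟨δ, hδ, rfl⟩
        exact C_subst_flat γ a δ hδ

lemma dualT_involutive {d : Λ → Λ} (hd : Function.Involutive d) (γ : Tmpl Λ) :
    (γ.dualT d).dualT d = γ := by
  induction γ <;> simp [Tmpl.dualT, *] <;> exact hd _

lemma neg_involutive {d : Λ → Λ} (hd : Function.Involutive d) (φ : Fp Λ) :
    (φ.neg d).neg d = φ := by
  induction φ <;> simp [Fp.neg, dualT_involutive hd, *] <;> exact hd _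

lemma neg_subst {d : Λ → Λ} (δ : Tmpl Λ) (a b : Fp Λ) :
    (Tmpl.subst δ a b).neg d = Tmpl.subst (δ.dualT d) (a.neg d) (b.neg d) := by
  induction δ <;> simp [Tmpl.subst, Tmpl.dualT, Fp.neg, *]


end FLaux


open FLaux in
/-- For an involutive dual map `d`, the Fischer–Ladner closure of
any fixed-point formula `φ` — the least set containing `φ` that is
Fischer–Ladner closed — is finite. -/
theorem fischerLadner_closure_finite {Λ : Type*} (d : Λ → Λ)
    (hd : Function.Involutive d) (φ : Fp Λ) :
    (⋂₀ {S : Set (Fp Λ) | φ ∈ S ∧ FLClosed d S}).Finite := by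
  classical
  set T : Set (Fp Λ) := C φ ∪ (Fp.neg d '' C φ) with hT
  have subC : ∀ {ψ χ : Fp Λ}, ψ ∈ C φ → χ ∈ C ψ → χ ∈ C φ :=
    fun h1 h2 => C_trans h1 h2
  have hfin : T.Finite := (C_finite φ).union ((C_finite φ).image _)
  have hφT : φ ∈ T := Or.inl (self_mem_C φ)
  have hclosed : FLClosed d T := by
    refine ⟨?_, ?_, ?_, ?_, ?_, ?_, ?_, ?_⟩
    · -- and
      rintro a b (h | ⟨ψ, hψ, heq⟩)
      · exact ⟨Or.inl (subC h (Or.inr (Or.inl (self_mem_C a)))),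
          Or.inl (subC h (Or.inr (Or.inr (self_mem_C b))))⟩
      · cases ψ <;> simp [Fp.neg] at heq
        case or ψ1 ψ2 =>
          obtain ⟨h1, h2⟩ := heq
          exact ⟨Or.inr ⟨ψ1, subC hψ (Or.inr (Or.inl (self_mem_C ψ1))), h1⟩,
            Or.inr ⟨ψ2, subC hψ (Or.inr (Or.inr (self_mem_C ψ2))), h2⟩⟩
    · -- or
      rintro a b (h | ⟨ψ, hψ, heq⟩)
      · exact ⟨Or.inl (subC h (Or.inr (Or.inl (self_mem_C a)))),
          Or.inl (subC h (Or.inr (Or.inr (self_mem_C b))))⟩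
      · cases ψ <;> simp [Fp.neg] at heq
        case and ψ1 ψ2 =>
          obtain ⟨h1, h2⟩ := heq
          exact ⟨Or.inr ⟨ψ1, subC hψ (Or.inr (Or.inl (self_mem_C ψ1))), h1⟩,
            Or.inr ⟨ψ2, subC hψ (Or.inr (Or.inr (self_mem_C ψ2))), h2⟩⟩
    · -- mod
      rintro h a (hm | ⟨ψ, hψ, heq⟩)
      · exact Or.inl (subC hm (Or.inr (self_mem_C a)))
      · cases ψ <;> simp [Fp.neg] at heq
        case mod h' ψ1 =>
          obtain ⟨_, h2⟩ := heq
          exact Or.inr ⟨ψ1, subC hψ (Or.inr (self_mem_C ψ1)), h2⟩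
    · -- sharp arg
      rintro γ a (hm | ⟨ψ, hψ, heq⟩)
      · exact Or.inl (subC hm (Or.inr (Or.inl (self_mem_C a))))
      · cases ψ <;> simp [Fp.neg] at heq
        case flat γ' ψ1 =>
          obtain ⟨_, h2⟩ := heq
          exact Or.inr ⟨ψ1, subC hψ (Or.inr (Or.inl (self_mem_C ψ1))), h2⟩
    · -- flat arg
      rintro γ a (hm | ⟨ψ, hψ, heq⟩)
      · exact Or.inl (subC hm (Or.inr (Or.inl (self_mem_C a))))
      · cases ψ <;> simp [Fp.neg] at heq
        case sharp γ' ψ1 =>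
          obtain ⟨_, h2⟩ := heq
          exact Or.inr ⟨ψ1, subC hψ (Or.inr (Or.inl (self_mem_C ψ1))), h2⟩
    · -- negation
      rintro ψ (h | ⟨χ, hχ, rfl⟩)
      · exact Or.inr ⟨ψ, h, rfl⟩
      · exact Or.inl (by rwa [FLaux.neg_involutive hd])
    · -- sharp unfolding
      rintro γ a (hm | ⟨ψ, hψ, heq⟩)
      · exact Or.inl (subC hm (Or.inr (Or.inr ⟨γ, self_mem_subT γ, rfl⟩)))
      · cases ψ <;> simp [Fp.neg] at heq
        case flat γ' ψ1 =>
          obtain ⟨h1, h2⟩ := heq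
          refine Or.inr ⟨Tmpl.subst γ' ψ1 (Fp.flat γ' ψ1),
            subC hψ (Or.inr (Or.inr ⟨γ', self_mem_subT γ', rfl⟩)), ?_⟩
          rw [neg_subst, h1, h2]
          show Tmpl.subst γ a (Fp.neg d (Fp.flat γ' ψ1)) = _
          simp [Fp.neg, h1, h2]
    · -- flat unfolding
      rintro γ a (hm | ⟨ψ, hψ, heq⟩)
      · exact Or.inl (subC hm (Or.inr (Or.inr ⟨γ, self_mem_subT γ, rfl⟩)))
      · cases ψ <;> simp [Fp.neg] at heq
        case sharp γ' ψ1 =>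
          obtain ⟨h1, h2⟩ := heq
          refine Or.inr ⟨Tmpl.subst γ' ψ1 (Fp.sharp γ' ψ1),
            subC hψ (Or.inr (Or.inr ⟨γ', self_mem_subT γ', rfl⟩)), ?_⟩
          rw [neg_subst, h1, h2]
          show Tmpl.subst γ a (Fp.neg d (Fp.sharp γ' ψ1)) = _
          simp [Fp.neg, h1, h2]
  exact hfin.subset (Set.sInter_subset_of_mem ⟨hφT, hclosed⟩)
end
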